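/- Let (L, [−,−]) be a Leibniz algebra over a field F, λ, μ : L → L linear maps, s ∈ L, and {a,b} = [a,b] + λ(a) + μ(b) + s the associated bi-affine bracket with Leibnizian Λ(a,b,c) = {a,{b,c}} − {{a,b},c} + {{a,c},b}. Then Λ(a,b,c) = {a,{b,b}} for all a, b, c ∈ L (i.e. L is a homogeneous Leibniz affgebra) if and only if the following hold for all a, b ∈ L: (1) [λ(a),b] − [a,μ(b)] = λ([a,b]); (2) [μ(a),b] − [μ(b),a] = μ([a,b]); (3) [s,a] + μ(a) = μ(μ(a)) + λ(μ(a)). -/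
import Mathlib


/-- For a Leibniz algebra `(L, B)` with bi-affine bracket
`{a,b} = B a b + lam a + mu b + s` and Leibnizian
`Λ(a,b,c) = {a,{b,c}} − {{a,b},c} + {{a,c},b}`, the bracket is homogeneous
(`Λ(a,b,c) = {a,{b,b}}` for all `a b c`) if and only if conditions (1)–(3) hold. -/
theorem homogeneous_leibniz_affgebra_characterization
    {F L : Type*} [Field F] [AddCommGroup L] [Module F L]
    (B : L →ₗ[F] L →ₗ[F] L)
    (leib : ∀ a b c : L, B (B a b) c = B (B a c) b + B a (B b c))
    (lam mu : L →ₗ[F] L) (s : L)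
    (br : L → L → L) (hbr : ∀ a b, br a b = B a b + lam a + mu b + s)
    (Λ : L → L → L → L)
    (hΛ : ∀ a b c, Λ a b c = br a (br b c) - br (br a b) c + br (br a c) b) :
    (∀ a b c : L, Λ a b c = br a (br b b)) ↔
      ((∀ a b : L, B (lam a) b - B a (mu b) = lam (B a b)) ∧
       (∀ a b : L, B (mu a) b - B (mu b) a = mu (B a b)) ∧
       (∀ a : L, B s a + mu a = mu (mu a) + lam (mu a))) := by
  have h0 : ∀ a b : L, B a (B b b) = 0 := fun a b => left_eq_add.mp (leib a b b)
  constructor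
  · intro H
    have h3 : ∀ x : L, B s x + mu x = mu (mu x) + lam (mu x) := by
      intro x
      have h := H 0 0 x
      simp only [hΛ, hbr, map_zero, map_add, LinearMap.add_apply,
        LinearMap.zero_apply, zero_add, add_zero] at h
      rw [← sub_eq_zero] at h ⊢
      rw [← neg_eq_zero] at h
      rw [← h]; abel
    have h3' : ∀ x : L, B s x = mu (mu x) + lam (mu x) - mu x := by
      intro x; rw [← h3 x]; abel
    have h4 : ∀ b : L, mu (B b b) = 0 := by
      intro b
      have h := H 0 b 0
      simp only [hΛ, hbr, map_zero, map_add, LinearMap.add_apply,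
        LinearMap.zero_apply, zero_add, add_zero, h3'] at h
      rw [← sub_eq_zero] at h
      rw [← neg_eq_zero] at h
      rw [← h]; abel
    have h2 : ∀ a b : L, B (mu a) b - B (mu b) a = mu (B a b) := by
      intro a b
      have h := H 0 a b
      simp only [hΛ, hbr, map_zero, map_add, LinearMap.add_apply,
        LinearMap.zero_apply, zero_add, add_zero, h3', h4] at h
      rw [← sub_eq_zero] at h ⊢
      rw [← neg_eq_zero] at h
      rw [← h]; abel
    have h1 : ∀ a b : L, B (lam a) b - B a (mu b) = lam (B a b) := by
      intro a b
      have h := H a b 0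
      simp only [hΛ, hbr, map_zero, map_add, LinearMap.add_apply,
        LinearMap.zero_apply, zero_add, add_zero, h3', h4, h0] at h
      rw [← sub_eq_zero] at h ⊢
      rw [← h]; abel
    exact ⟨h1, h2, h3⟩
  · rintro ⟨h1, h2, h3⟩ a b c
    have e1 : ∀ x y : L, lam (B x y) = B (lam x) y - B x (mu y) := fun x y => (h1 x y).symm
    have e2 : ∀ x y : L, mu (B x y) = B (mu x) y - B (mu y) x := fun x y => (h2 x y).symm
    have e3 : ∀ x : L, B s x = mu (mu x) + lam (mu x) - mu x := by
      intro x; rw [← h3 x]; abel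
    simp only [hΛ, hbr, map_add, map_sub, LinearMap.add_apply, LinearMap.sub_apply,
      e1, e2, e3, h0]
    rw [leib a b c]
    abel
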